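/- Let 𝔽 be a composition-consistent set of measurable functions ℝ₊ → ℝ. Assume 𝒫 contains a least favorable measure ℙ* with respect to 𝔽, with likelihood ratio ℓ* = dℙ*/dℚ, that F_{ℓ*}^{ℙ*} is continuous and 1/ℓ* has finite variance under ℙ*. Let x₀ > 0 and let (W_ℙ)_{ℙ∈𝒫} be a family of preferences that is 𝔽-family consistent on Y^{x₀} with respect to ℙ*. Suppose the maximization problem max_{X ∈ Y^{x₀}_{W_{ℙ*}}} W_{ℙ*}(X) has a solution X̃ ∈ Y^{x₀} which ℙ*-a.s. equals f(ℓ*) for some f ∈ 𝔽. Then max_{X ∈ Y^{x₀}} inf_{ℙ∈𝒫} W_ℙ(X) = max_{X ∈ Y^{x₀}_{W_{ℙ*}}} W_{ℙ*}(X), and the left-hand maximum is attained by X̃. -/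

import Mathlib

open MeasureTheory Set Real

noncomputable section

/-- CDF of a distribution (measure) on `ℝ`. -/
def mcdf (μ : Measure ℝ) : ℝ → ℝ := fun x => (μ (Iic x)).toReal

/-- CDF of the random variable `X` under `P`. -/
def rvCdf {Ω : Type*} [MeasurableSpace Ω] (P : Measure Ω) (X : Ω → ℝ) : ℝ → ℝ :=
  mcdf (P.map X)

/-- Left-continuous quantile function of a distribution function `F`. -/
def quantile (F : ℝ → ℝ) (p : ℝ) : ℝ := sInf {x : ℝ | p ≤ F x}

/-- Integral stochastic ordering w.r.t. a class `𝔽`, between distributions on `ℝ`. -/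
def IntOrder (𝔽 : Set (ℝ → ℝ)) (μ ν : Measure ℝ) : Prop :=
  ∀ f ∈ 𝔽, Integrable f μ → Integrable f ν → ∫ x, f x ∂μ ≤ ∫ x, f x ∂ν

/-- Real-valued likelihood ratio `dP/dQ`. -/
def lr {Ω : Type*} [MeasurableSpace Ω] (P Q : Measure Ω) : Ω → ℝ :=
  fun ω => (P.rnDeriv Q ω).toReal

/-- A payoff: a nonnegative measurable random variable with finite `Q`-expectation. -/
def IsPayoff {Ω : Type*} [MeasurableSpace Ω] (Q : Measure Ω) (X : Ω → ℝ) : Prop :=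
  Measurable X ∧ (∀ ω, 0 ≤ X ω) ∧ Integrable X Q

/-- `𝔽_FSD`: all nondecreasing functions on `ℝ₊`. -/
def FFSD : Set (ℝ → ℝ) := {f | MonotoneOn f (Ici 0)}

/-- Budget set `Y^{x₀}_{W_P}`: payoffs with finite preference value and price at most
`x₀`. -/
def BudgetSet {Ω : Type*} [MeasurableSpace Ω] (Q : Measure Ω) (r T x₀ : ℝ)
    (W : (Ω → ℝ) → EReal) : Set (Ω → ℝ) :=
  {X | IsPayoff Q X ∧ W X ≠ ⊤ ∧ W X ≠ ⊥ ∧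
    Real.exp (-(r * T)) * ∫ ω, X ω ∂Q ≤ x₀}

/-- `Y^{x₀} = ⋂_{P ∈ Ps} Y^{x₀}_{W_P}`. -/
def BudgetSetAll {Ω : Type*} [MeasurableSpace Ω] (Q : Measure Ω) (r T x₀ : ℝ)
    (Ps : Set (Measure Ω)) (W : Measure Ω → (Ω → ℝ) → EReal) : Set (Ω → ℝ) :=
  {X | ∀ P ∈ Ps, X ∈ BudgetSet Q r T x₀ (W P)}

/-- Composition-consistency of `𝔽`. -/
def CompConsistent (𝔽 : Set (ℝ → ℝ)) : Prop := ∀ f ∈ 𝔽, ∀ g ∈ 𝔽, f ∘ g ∈ 𝔽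

/-- for a composition-consistent class `𝔽` admitting a least favorable
measure `ℙ*` (with `F_{ℓ*}^{ℙ*}` continuous and `1/ℓ*` of finite variance), and an
`𝔽`-family-consistent family of preferences, if the single-measure problem under `ℙ*` has
a solution `X̃ ∈ Y^{x₀}` that `ℙ*`-a.s. equals `f(ℓ*)` for some `f ∈ 𝔽`, then
`max_{X ∈ Y^{x₀}} inf_{P ∈ Ps} W_P(X) = max_{X ∈ Y^{x₀}_{W_{ℙ*}}} W_{ℙ*}(X)`, the
left-hand maximum being attained by `X̃` itself. -/
theorem stmt12 {Ω : Type*} [MeasurableSpace Ω]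
    (Q : Measure Ω) [IsProbabilityMeasure Q] (r T : ℝ) (hT : 0 < T)
    (Ps : Set (Measure Ω))
    (hPsprob : ∀ P ∈ Ps, IsProbabilityMeasure P)
    (hPsequiv : ∀ P ∈ Ps, P ≪ Q ∧ Q ≪ P)
    (𝔽 : Set (ℝ → ℝ)) (h𝔽meas : ∀ f ∈ 𝔽, Measurable (fun x : Ici (0:ℝ) => f x))
    (hcomp : CompConsistent 𝔽)
    -- least favorable measure w.r.t. 𝔽
    (Pstar : Measure Ω) (hPstar : Pstar ∈ Ps)
    (hLF : ∀ P ∈ Ps, IntOrder 𝔽 (Pstar.map (lr Pstar Q)) (P.map (lr Pstar Q)))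
    (hcont : Continuous (rvCdf Pstar (lr Pstar Q)))
    (hvar : Integrable (fun ω => (1 / lr Pstar Q ω) ^ 2) Pstar)
    (x₀ : ℝ) (hx₀ : 0 < x₀)
    (W : Measure Ω → (Ω → ℝ) → EReal)
    -- 𝔽-family consistency on Y^{x₀} w.r.t. ℙ*
    (hfc : ∀ X ∈ BudgetSetAll Q r T x₀ Ps W,
      (∀ P ∈ Ps, IntOrder 𝔽 (Pstar.map X) (P.map X)) →
      ∀ P ∈ Ps, W Pstar X ≤ W P X)
    -- a solution X̃ ∈ Y^{x₀} of the maximization problem under ℙ*, with X̃ = f(ℓ*) ℙ*-a.s.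
    (Xt : Ω → ℝ)
    (hXt : Xt ∈ BudgetSet Q r T x₀ (W Pstar))
    (hXtmax : ∀ X ∈ BudgetSet Q r T x₀ (W Pstar), W Pstar X ≤ W Pstar Xt)
    (hXtall : Xt ∈ BudgetSetAll Q r T x₀ Ps W)
    (f : ℝ → ℝ) (hf : f ∈ 𝔽)
    (hXtf : Xt =ᵐ[Pstar] fun ω => f (lr Pstar Q ω)) :
    (⨅ P ∈ Ps, W P Xt) = W Pstar Xt ∧
    (∀ X ∈ BudgetSetAll Q r T x₀ Ps W, (⨅ P ∈ Ps, W P X) ≤ W Pstar Xt) := by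
  set ℓ : Ω → ℝ := lr Pstar Q with hℓdef
  have hℓmeas : Measurable ℓ := (Measure.measurable_rnDeriv Pstar Q).ennreal_toReal
  have hℓnn : ∀ ω, 0 ≤ ℓ ω := fun ω => ENNReal.toReal_nonneg
  have hXtmeas : Measurable Xt := hXt.1.1
  -- main ordering claim
  have horder : ∀ P ∈ Ps, IntOrder 𝔽 (Pstar.map Xt) (P.map Xt) := by
    intro P hP g hg hgint1 hgint2
    have hPP : P ≪ Pstar := (hPsequiv P hP).1.trans (hPsequiv Pstar hPstar).2
    have hk : g ∘ f ∈ 𝔽 := hcomp g hg f hf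
    -- measurable extension of g ∘ f to all of ℝ
    set K : ℝ → ℝ := fun x => (g ∘ f) (max x 0) with hKdef
    have hKmeas : Measurable K := by
      have h1 : Measurable (fun x : ℝ => (⟨max x 0, le_max_right x 0⟩ : Ici (0:ℝ))) :=
        (measurable_id.max measurable_const).subtype_mk
      exact (h𝔽meas _ hk).comp h1
    have hKeq : ∀ x, 0 ≤ x → K x = g (f x) := fun x hx => by
      simp only [hKdef, Function.comp_apply, max_eq_left hx]
    have key : ∀ P' : Measure Ω, P' ≪ Pstar → Integrable g (P'.map Xt) →
        Integrable (g ∘ f) (P'.map ℓ) ∧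
          ∫ x, g x ∂(P'.map Xt) = ∫ x, (g ∘ f) x ∂(P'.map ℓ) := by
      intro P' hP' hgint
      have hae : Xt =ᵐ[P'] fun ω => f (ℓ ω) := hXtf.filter_mono hP'.ae_le
      have hnn : ∀ᵐ x ∂(P'.map ℓ), 0 ≤ x := by
        rw [ae_iff]
        have hpre : ℓ ⁻¹' (Iio 0) = ∅ :=
          Set.eq_empty_of_forall_notMem fun ω h => absurd h (not_lt.2 (hℓnn ω))
        have : (P'.map ℓ) (Iio 0) = 0 := by
          rw [Measure.map_apply hℓmeas measurableSet_Iio, hpre, measure_empty]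
        simp only [not_le]; exact this
      have hKk : K =ᵐ[P'.map ℓ] (g ∘ f) := hnn.mono fun x hx => hKeq x hx
      have haeg : ∀ᵐ ω ∂P', g (Xt ω) = K (ℓ ω) :=
        hae.mono fun ω h => by rw [h, hKeq _ (hℓnn ω)]
      -- integrability transfers
      have i1 : Integrable (fun ω => g (Xt ω)) P' :=
        (integrable_map_measure hgint.1 hXtmeas.aemeasurable).mp hgint
      have i2 : Integrable (fun ω => K (ℓ ω)) P' := i1.congr haeg
      have i3 : Integrable K (P'.map ℓ) :=
        (integrable_map_measure hKmeas.aestronglyMeasurable hℓmeas.aemeasurable).mpr i2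
      have i4 : Integrable (g ∘ f) (P'.map ℓ) := i3.congr hKk
      refine ⟨i4, ?_⟩
      calc ∫ x, g x ∂(P'.map Xt) = ∫ ω, g (Xt ω) ∂P' :=
            integral_map hXtmeas.aemeasurable hgint.1
        _ = ∫ ω, K (ℓ ω) ∂P' := integral_congr_ae haeg
        _ = ∫ x, K x ∂(P'.map ℓ) :=
            (integral_map hℓmeas.aemeasurable hKmeas.aestronglyMeasurable).symm
        _ = ∫ x, (g ∘ f) x ∂(P'.map ℓ) := integral_congr_ae hKk
    obtain ⟨j1, e1⟩ := key Pstar Measure.AbsolutelyContinuous.rfl hgint1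
    obtain ⟨j2, e2⟩ := key P hPP hgint2
    rw [e1, e2]
    exact hLF P hP (g ∘ f) hk j1 j2
  have hle : ∀ P ∈ Ps, W Pstar Xt ≤ W P Xt := hfc Xt hXtall horder
  constructor
  · exact le_antisymm (iInf₂_le Pstar hPstar) (le_iInf₂ hle)
  · intro X hX
    calc (⨅ P ∈ Ps, W P X) ≤ W Pstar X := iInf₂_le Pstar hPstar
      _ ≤ W Pstar Xt := hXtmax X (hX Pstar hPstar)
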